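/- In the GE model with intersection bonus and 1-lookahead, for every n and T there exists a deterministic 1-lookahead algorithm that is 4-competitive: on every general-evolution intersection-bonus instance with T time steps, the value of its output sequence is at least OPT/4. -/

import Mathlib

/-- The value of a solution sequence under the intersection bonus: total profit
plus, for each pair of consecutive steps, the size of the intersection of the two
solutions. -/
noncomputable def intVal (n T : ℕ) (p : ℕ → Finset (Fin n) → ℝ)
    (S : ℕ → Finset (Fin n)) : ℝ :=
  (∑ t ∈ Finset.range T, p t (S t)) +
    ∑ t ∈ Finset.range (T - 1), ((S t ∩ S (t + 1)).card : ℝ)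

/-- A valid multistage instance: the empty set is feasible at every time step and
profits are nonnegative. -/
def ValidInstance (n T : ℕ) (F : ℕ → Set (Finset (Fin n)))
    (p : ℕ → Finset (Fin n) → ℝ) : Prop :=
  (∀ t, t < T → (∅ : Finset (Fin n)) ∈ F t) ∧ ∀ t, t < T → ∀ S, 0 ≤ p t S

/-- A solution sequence: feasible at every time step. -/
def IsSol (n T : ℕ) (F : ℕ → Set (Finset (Fin n))) (S : ℕ → Finset (Fin n)) : Prop :=
  ∀ t, t < T → S t ∈ F t

/-- A deterministic online algorithm: the solution output at time `t < T` depends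
only on the data `(F_s, p_s)` revealed up to time `s ≤ t`. -/
def IsOnline (n T : ℕ)
    (alg : (ℕ → Set (Finset (Fin n))) → (ℕ → Finset (Fin n) → ℝ) → ℕ → Finset (Fin n)) :
    Prop :=
  ∀ F p F' p', ∀ t, t < T →
    (∀ s, s ≤ t → F s = F' s ∧ p s = p' s) → alg F p t = alg F' p' t

/-- A deterministic 1-lookahead algorithm: the solution output at time `t < T`
depends only on the data `(F_s, p_s)` for `s ≤ min (t+1) (T-1)`, i.e. it
additionally knows the next time step's data. -/
def IsLookahead1 (n T : ℕ)
    (alg : (ℕ → Set (Finset (Fin n))) → (ℕ → Finset (Fin n) → ℝ) → ℕ → Finset (Fin n)) :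
    Prop :=
  ∀ F p F' p', ∀ t, t < T →
    (∀ s, s ≤ t + 1 → s < T → F s = F' s ∧ p s = p' s) → alg F p t = alg F' p' t

set_option linter.unusedSectionVars false

namespace Stmt11

open Finset

open Finset

noncomputable def bestOf {α : Type*} [Inhabited α] (s : Finset α) (f : α → ℝ) : α :=
  if h : s.Nonempty then (s.exists_max_image f h).choose else default

lemma bestOf_mem {α : Type*} [Inhabited α] {s : Finset α} (f : α → ℝ) (h : s.Nonempty) :
    bestOf s f ∈ s := by
  rw [bestOf, dif_pos h]
  exact (s.exists_max_image f h).choose_spec.1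

lemma le_bestOf {α : Type*} [Inhabited α] {s : Finset α} (f : α → ℝ) (h : s.Nonempty)
    {a : α} (ha : a ∈ s) : f a ≤ f (bestOf s f) := by
  rw [bestOf, dif_pos h]
  exact (s.exists_max_image f h).choose_spec.2 a ha

variable (n T : ℕ)

open Classical in
noncomputable def feas (F : ℕ → Set (Finset (Fin n))) (t : ℕ) : Finset (Finset (Fin n)) :=
  Finset.univ.filter (fun S => S ∈ F t)

lemma mem_feas' {m : ℕ} {F : ℕ → Set (Finset (Fin m))} {t : ℕ} {S : Finset (Fin m)} :
    S ∈ feas m F t ↔ S ∈ F t := by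
  classical
  simp [feas]

noncomputable def pairf (p : ℕ → Finset (Fin n) → ℝ) (t : ℕ)
    (AB : Finset (Fin n) × Finset (Fin n)) : ℝ :=
  p t AB.1 + p (t + 1) AB.2 + ((AB.1 ∩ AB.2).card : ℝ)

noncomputable def bp (F : ℕ → Set (Finset (Fin n))) (p : ℕ → Finset (Fin n) → ℝ) (t : ℕ) :
    Finset (Fin n) × Finset (Fin n) :=
  bestOf ((feas n F t) ×ˢ (feas n F (t + 1))) (pairf n p t)

noncomputable def w (F : ℕ → Set (Finset (Fin n))) (p : ℕ → Finset (Fin n) → ℝ) (t : ℕ) : ℝ :=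
  pairf n p t (bp n F p t)

noncomputable def bs (F : ℕ → Set (Finset (Fin n))) (p : ℕ → Finset (Fin n) → ℝ) (t : ℕ) :
    Finset (Fin n) :=
  bestOf (feas n F t) (p t)

open Classical in
noncomputable def st (F : ℕ → Set (Finset (Fin n))) (p : ℕ → Finset (Fin n) → ℝ) :
    ℕ → Option (ℝ × Finset (Fin n))
  | 0 => none
  | (t + 1) =>
    match st F p t with
    | none => if t + 1 < T then some (w n F p t, (bp n F p t).2) else none
    | some (v, _) =>
        if t + 1 < T ∧ 2 * v ≤ w n F p t then some (w n F p t, (bp n F p t).2) else none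

open Classical in
noncomputable def algo (F : ℕ → Set (Finset (Fin n))) (p : ℕ → Finset (Fin n) → ℝ) (t : ℕ) :
    Finset (Fin n) :=
  match st n T F p t with
  | none => if t + 1 < T then (bp n F p t).1 else bs n F p t
  | some (v, B) => if t + 1 < T ∧ 2 * v ≤ w n F p t then (bp n F p t).1 else B


open Classical in
noncomputable def cw (F : ℕ → Set (Finset (Fin n))) (p : ℕ → Finset (Fin n) → ℝ) (s : ℕ) : ℝ :=
  match st n T F p (s + 1) with
  | none => 0
  | some (v, _) => if s + 1 + 1 < T ∧ 2 * v ≤ w n F p (s + 1) then 0 else w n F p s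

open Classical in
noncomputable def hpot (F : ℕ → Set (Finset (Fin n))) (p : ℕ → Finset (Fin n) → ℝ) (t : ℕ) : ℝ :=
  match st n T F p t with
  | none => 0
  | some (v, _) => if t + 1 < T ∧ 2 * v ≤ w n F p t then 2 * v else -(2 * v)

noncomputable def rho (F : ℕ → Set (Finset (Fin n))) (p : ℕ → Finset (Fin n) → ℝ) (t : ℕ) : ℝ :=
  match st n T F p t with
  | none => 0
  | some _ => p (t - 1) (algo n T F p (t - 1))


lemma st_succ (F : ℕ → Set (Finset (Fin n))) (p : ℕ → Finset (Fin n) → ℝ) (t : ℕ) :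
    st n T F p (t + 1) =
      match st n T F p t with
      | none => if t + 1 < T then some (w n F p t, (bp n F p t).2) else none
      | some (v, _) =>
          if t + 1 < T ∧ 2 * v ≤ w n F p t then some (w n F p t, (bp n F p t).2) else none := rfl


section Valid

variable {n T : ℕ} {F : ℕ → Set (Finset (Fin n))} {p : ℕ → Finset (Fin n) → ℝ}
variable (hF : ∀ t, t < T → (∅ : Finset (Fin n)) ∈ F t)
variable (hp : ∀ t, t < T → ∀ S, 0 ≤ p t S)

include hF in
lemma feas_ne {t : ℕ} (ht : t < T) : (feas n F t).Nonempty :=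
  ⟨∅, mem_feas'.2 (hF t ht)⟩

include hF in
lemma pair_ne {t : ℕ} (ht : t + 1 < T) :
    ((feas n F t) ×ˢ (feas n F (t + 1))).Nonempty :=
  (feas_ne hF (Nat.lt_of_succ_lt ht)).product (feas_ne hF ht)

include hF in
lemma bp_mem_fst {t : ℕ} (ht : t + 1 < T) : (bp n F p t).1 ∈ F t := by
  have := bestOf_mem (pairf n p t) (pair_ne hF ht)
  rw [Finset.mem_product] at this
  exact mem_feas'.1 this.1

include hF in
lemma bp_mem_snd {t : ℕ} (ht : t + 1 < T) : (bp n F p t).2 ∈ F (t + 1) := by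
  have := bestOf_mem (pairf n p t) (pair_ne hF ht)
  rw [Finset.mem_product] at this
  exact mem_feas'.1 this.2

include hF in
lemma le_w {t : ℕ} (ht : t + 1 < T) {A B : Finset (Fin n)}
    (hA : A ∈ F t) (hB : B ∈ F (t + 1)) :
    p t A + p (t + 1) B + ((A ∩ B).card : ℝ) ≤ w n F p t :=
  le_bestOf (pairf n p t) (pair_ne hF ht) (a := (A, B))
    (Finset.mem_product.2 ⟨mem_feas'.2 hA, mem_feas'.2 hB⟩)

include hF hp in
lemma w_nonneg {t : ℕ} (ht : t + 1 < T) : 0 ≤ w n F p t := by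
  have h := le_w (p := p) hF ht (hF t (Nat.lt_of_succ_lt ht)) (hF (t + 1) ht)
  have h1 := hp t (Nat.lt_of_succ_lt ht) (∅ : Finset (Fin n))
  have h2 := hp (t + 1) ht (∅ : Finset (Fin n))
  simp only [Finset.empty_inter, Finset.card_empty, Nat.cast_zero, add_zero] at h
  linarith

include hF in
lemma bs_mem {t : ℕ} (ht : t < T) : bs n F p t ∈ F t :=
  mem_feas'.1 (bestOf_mem (p t) (feas_ne hF ht))

include hF in
lemma le_bs {t : ℕ} (ht : t < T) {S : Finset (Fin n)} (hS : S ∈ F t) :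
    p t S ≤ p t (bs n F p t) :=
  le_bestOf (p t) (feas_ne hF ht) (mem_feas'.2 hS)

lemma st_some {t : ℕ} {v : ℝ} {B : Finset (Fin n)}
    (h : st n T F p (t + 1) = some (v, B)) :
    t + 1 < T ∧ v = w n F p t ∧ B = (bp n F p t).2 ∧ algo n T F p t = (bp n F p t).1 := by
  rcases hst : st n T F p t with _ | ⟨v', B'⟩
  · simp only [st, hst] at h
    by_cases ht : t + 1 < T
    · rw [if_pos ht] at h
      injection h with h'
      injection h' with h1 h2
      refine ⟨ht, h1.symm, h2.symm, ?_⟩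
      simp only [algo, hst]
      rw [if_pos ht]
    · rw [if_neg ht] at h; exact absurd h (by simp)
  · simp only [st, hst] at h
    by_cases hc : t + 1 < T ∧ 2 * v' ≤ w n F p t
    · rw [if_pos hc] at h
      injection h with h'
      injection h' with h1 h2
      refine ⟨hc.1, h1.symm, h2.symm, ?_⟩
      simp only [algo, hst]
      rw [if_pos hc]
    · rw [if_neg hc] at h; exact absurd h (by simp)

include hF hp in
lemma st_some_nonneg {t : ℕ} {v : ℝ} {B : Finset (Fin n)}
    (h : st n T F p t = some (v, B)) : 0 ≤ v := by
  rcases t with _ | t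
  · simp only [st] at h
    exact absurd h (by simp)
  · obtain ⟨ht, hv, -, -⟩ := st_some h
    rw [hv]; exact w_nonneg hF hp ht

include hF in
lemma algo_feas {t : ℕ} (ht : t < T) : algo n T F p t ∈ F t := by
  rcases hst : st n T F p t with _ | ⟨v, B⟩
  · simp only [algo, hst]
    by_cases h1 : t + 1 < T
    · rw [if_pos h1]; exact bp_mem_fst hF h1
    · rw [if_neg h1]; exact bs_mem hF ht
  · simp only [algo, hst]
    by_cases hc : t + 1 < T ∧ 2 * v ≤ w n F p t
    · rw [if_pos hc]; exact bp_mem_fst hF hc.1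
    · rw [if_neg hc]
      rcases t with _ | r
      · simp only [st] at hst
        exact absurd hst (by simp)
      · obtain ⟨hr, -, hB, -⟩ := st_some hst
        rw [hB]; exact bp_mem_snd hF hr

include hF hp in
lemma inv3 : ∀ t, t ≤ T - 1 →
    ∑ s ∈ Finset.range t, w n F p s ≤
      4 * ∑ s ∈ Finset.range t, cw n T F p s + hpot n T F p t := by
  intro t
  induction t with
  | zero => intro _; simp [hpot, st]
  | succ t IH =>
    intro ht1
    have htT : t + 1 < T := by omega
    have hIH := IH (by omega)
    have hw0 : 0 ≤ w n F p t := w_nonneg hF hp htT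
    rw [Finset.sum_range_succ, Finset.sum_range_succ]
    rcases hst : st n T F p t with _ | ⟨v, B⟩
    · have hpt : hpot n T F p t = 0 := by simp [hpot, hst]
      rw [hpt] at hIH
      have hst1 : st n T F p (t + 1) = some (w n F p t, (bp n F p t).2) := by
        simp only [st, hst]; rw [if_pos htT]
      by_cases hc2 : t + 1 + 1 < T ∧ 2 * w n F p t ≤ w n F p (t + 1)
      · have hcw : cw n T F p t = 0 := by simp only [cw, hst1]; rw [if_pos hc2]
        have hh : hpot n T F p (t + 1) = 2 * w n F p t := by
          simp only [hpot, hst1]; rw [if_pos hc2]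
        rw [hcw, hh]; linarith
      · have hcw : cw n T F p t = w n F p t := by simp only [cw, hst1]; rw [if_neg hc2]
        have hh : hpot n T F p (t + 1) = -(2 * w n F p t) := by
          simp only [hpot, hst1]; rw [if_neg hc2]
        rw [hcw, hh]; linarith
    · have hv0 : 0 ≤ v := st_some_nonneg hF hp hst
      by_cases hc : t + 1 < T ∧ 2 * v ≤ w n F p t
      · have hpt : hpot n T F p t = 2 * v := by simp only [hpot, hst]; rw [if_pos hc]
        rw [hpt] at hIH
        have hst1 : st n T F p (t + 1) = some (w n F p t, (bp n F p t).2) := by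
          simp only [st, hst]; rw [if_pos hc]
        have hvw := hc.2
        by_cases hc2 : t + 1 + 1 < T ∧ 2 * w n F p t ≤ w n F p (t + 1)
        · have hcw : cw n T F p t = 0 := by simp only [cw, hst1]; rw [if_pos hc2]
          have hh : hpot n T F p (t + 1) = 2 * w n F p t := by
            simp only [hpot, hst1]; rw [if_pos hc2]
          rw [hcw, hh]; linarith
        · have hcw : cw n T F p t = w n F p t := by simp only [cw, hst1]; rw [if_neg hc2]
          have hh : hpot n T F p (t + 1) = -(2 * w n F p t) := by
            simp only [hpot, hst1]; rw [if_neg hc2]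
          rw [hcw, hh]; linarith
      · have hpt : hpot n T F p t = -(2 * v) := by simp only [hpot, hst]; rw [if_neg hc]
        rw [hpt] at hIH
        have hst1 : st n T F p (t + 1) = none := by
          simp only [st, hst]; rw [if_neg hc]
        have hcw : cw n T F p t = 0 := by simp only [cw, hst1]
        have hh : hpot n T F p (t + 1) = 0 := by simp only [hpot, hst1]
        push_neg at hc
        have hwv : w n F p t < 2 * v := hc htT
        rw [hcw, hh]; linarith

include hF hp in
lemma inv2 : ∀ t, t ≤ T →
    (∑ s ∈ Finset.range (t - 1), cw n T F p s) + rho n T F p t ≤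
      (∑ s ∈ Finset.range t, p s (algo n T F p s)) +
        ∑ s ∈ Finset.range (t - 1), ((algo n T F p s ∩ algo n T F p (s + 1)).card : ℝ) := by
  intro t
  induction t with
  | zero => intro _; simp [rho, st]
  | succ t IH =>
    intro ht1
    have htT : t < T := by omega
    have hpA : 0 ≤ p t (algo n T F p t) := hp t htT _
    simp only [Nat.add_sub_cancel]
    rw [Finset.sum_range_succ (fun s => p s (algo n T F p s))]
    rcases t with _ | r
    · simp only [Finset.range_zero, Finset.sum_empty, Finset.range_one]
      have hrho : rho n T F p 1 ≤ p 0 (algo n T F p 0) := by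
        rcases h1 : st n T F p 1 with _ | ⟨v, B⟩
        · simp [rho, h1]; exact hpA
        · simp [rho, h1]
      simpa using by linarith
    · have hIH := IH (by omega)
      simp only [Nat.add_sub_cancel] at hIH
      rw [Finset.sum_range_succ (cw n T F p),
        Finset.sum_range_succ (fun s => ((algo n T F p s ∩ algo n T F p (s + 1)).card : ℝ))]
      have hbnd : (0 : ℝ) ≤ ((algo n T F p r ∩ algo n T F p (r + 1)).card : ℝ) := by positivity
      rcases hst : st n T F p (r + 1) with _ | ⟨v, B⟩
      · have hcw : cw n T F p r = 0 := by simp only [cw, hst]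
        have hrho1 : rho n T F p (r + 1) = 0 := by simp [rho, hst]
        rw [hrho1] at hIH
        have hrho2 : rho n T F p (r + 1 + 1) ≤ p (r + 1) (algo n T F p (r + 1)) := by
          rcases h2 : st n T F p (r + 1 + 1) with _ | ⟨v, B⟩
          · simp [rho, h2]; exact hpA
          · simp [rho, h2, Nat.add_sub_cancel]
        rw [hcw]; linarith
      · by_cases hc : r + 1 + 1 < T ∧ 2 * v ≤ w n F p (r + 1)
        · have hcw : cw n T F p r = 0 := by simp only [cw, hst]; rw [if_pos hc]
          have hrho1 : rho n T F p (r + 1) = p r (algo n T F p r) := by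
            simp [rho, hst, Nat.add_sub_cancel]
          have hprA : 0 ≤ p r (algo n T F p r) := hp r (by omega) _
          rw [hrho1] at hIH
          have hst2 : st n T F p (r + 1 + 1) = some (w n F p (r + 1), (bp n F p (r + 1)).2) := by
            rw [st_succ, hst]; exact if_pos hc
          have hrho2 : rho n T F p (r + 1 + 1) = p (r + 1) (algo n T F p (r + 1)) := by
            simp [rho, hst2, Nat.add_sub_cancel]
          rw [hcw, hrho2]; linarith
        · obtain ⟨hr1, hv, hB, hA⟩ := st_some hst
          have hcw : cw n T F p r = w n F p r := by simp only [cw, hst]; rw [if_neg hc]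
          have hAt : algo n T F p (r + 1) = B := by simp only [algo, hst]; rw [if_neg hc]
          have hst2 : st n T F p (r + 1 + 1) = none := by
            rw [st_succ, hst]; exact if_neg hc
          have hrho2 : rho n T F p (r + 1 + 1) = 0 := by simp [rho, hst2]
          have hrho1 : rho n T F p (r + 1) = p r (algo n T F p r) := by
            simp [rho, hst, Nat.add_sub_cancel]
          rw [hrho1] at hIH
          have hwr : w n F p r = p r (algo n T F p r) + p (r + 1) (algo n T F p (r + 1)) +
              ((algo n T F p r ∩ algo n T F p (r + 1)).card : ℝ) := by
            rw [hA, hAt, hB, w, pairf]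
          rw [hcw, hrho2, hwr]; linarith


include hF hp in
lemma cw_le_val :
    ∑ s ∈ Finset.range (T - 1), cw n T F p s ≤
      (∑ s ∈ Finset.range T, p s (algo n T F p s)) +
        ∑ s ∈ Finset.range (T - 1), ((algo n T F p s ∩ algo n T F p (s + 1)).card : ℝ) := by
  have h := inv2 hF hp T le_rfl
  have hrho : 0 ≤ rho n T F p T := by
    rcases hTst : st n T F p T with _ | ⟨v, B⟩
    · simp [rho, hTst]
    · rcases T with _ | T'
      · simp only [st] at hTst
        exact absurd hTst (by simp)
      · simp only [rho, hTst, Nat.add_sub_cancel]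
        exact hp T' (by omega) _
  linarith

include hF hp in
lemma wsum_le_cwsum :
    ∑ s ∈ Finset.range (T - 1), w n F p s ≤ 4 * ∑ s ∈ Finset.range (T - 1), cw n T F p s := by
  have h := inv3 hF hp (T - 1) le_rfl
  have hh : hpot n T F p (T - 1) ≤ 0 := by
    rcases hTst : st n T F p (T - 1) with _ | ⟨v, B⟩
    · simp [hpot, hTst]
    · have hv0 : 0 ≤ v := st_some_nonneg hF hp hTst
      have hno : ¬(T - 1 + 1 < T) := by omega
      simp only [hpot, hTst]
      rw [if_neg fun hh' => hno hh'.1]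
      linarith
  linarith

include hF hp in
lemma opt_le_wsum {S : ℕ → Finset (Fin n)} (hS : ∀ t, t < T → S t ∈ F t) (hT2 : 2 ≤ T) :
    (∑ t ∈ Finset.range T, p t (S t)) + ∑ t ∈ Finset.range (T - 1), ((S t ∩ S (t + 1)).card : ℝ)
      ≤ ∑ t ∈ Finset.range (T - 1), w n F p t := by
  have key : ∑ t ∈ Finset.range (T - 1),
      (p t (S t) + p (t + 1) (S (t + 1)) + ((S t ∩ S (t + 1)).card : ℝ))
      ≤ ∑ t ∈ Finset.range (T - 1), w n F p t := by
    apply Finset.sum_le_sum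
    intro t htm
    have ht' : t < T - 1 := Finset.mem_range.1 htm
    exact le_w hF (by omega) (hS t (by omega)) (hS (t + 1) (by omega))
  have hsplit : ∑ t ∈ Finset.range (T - 1),
      (p t (S t) + p (t + 1) (S (t + 1)) + ((S t ∩ S (t + 1)).card : ℝ)) =
      (∑ t ∈ Finset.range (T - 1), p t (S t)) +
      (∑ t ∈ Finset.range (T - 1), p (t + 1) (S (t + 1))) +
      ∑ t ∈ Finset.range (T - 1), ((S t ∩ S (t + 1)).card : ℝ) := by
    rw [← Finset.sum_add_distrib, ← Finset.sum_add_distrib]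
  have hT1 : T - 1 + 1 = T := by omega
  have hshift : ∑ t ∈ Finset.range T, p t (S t) =
      (∑ t ∈ Finset.range (T - 1), p (t + 1) (S (t + 1))) + p 0 (S 0) := by
    conv_lhs => rw [← hT1]
    rw [Finset.sum_range_succ']
  have hfirst : p 0 (S 0) ≤ ∑ t ∈ Finset.range (T - 1), p t (S t) := by
    apply Finset.single_le_sum (f := fun t => p t (S t))
    · intro i hi
      exact hp i (by have := Finset.mem_range.1 hi; omega) _
    · exact Finset.mem_range.2 (by omega)
  linarith


end Valid
lemma feas_congr {F F' : ℕ → Set (Finset (Fin n))} {t : ℕ} (h : F t = F' t) :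
    feas n F t = feas n F' t := by
  ext S
  rw [mem_feas', mem_feas', h]

lemma bp_congr {F F' : ℕ → Set (Finset (Fin n))} {p p' : ℕ → Finset (Fin n) → ℝ} {t : ℕ}
    (h1 : F t = F' t) (h2 : F (t + 1) = F' (t + 1)) (h3 : p t = p' t)
    (h4 : p (t + 1) = p' (t + 1)) : bp n F p t = bp n F' p' t := by
  have hf : pairf n p t = pairf n p' t := by
    funext AB
    rw [pairf, pairf, h3, h4]
  rw [bp, bp, feas_congr n h1, feas_congr n h2, hf]

lemma w_congr {F F' : ℕ → Set (Finset (Fin n))} {p p' : ℕ → Finset (Fin n) → ℝ} {t : ℕ}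
    (h1 : F t = F' t) (h2 : F (t + 1) = F' (t + 1)) (h3 : p t = p' t)
    (h4 : p (t + 1) = p' (t + 1)) : w n F p t = w n F' p' t := by
  have hf : pairf n p t = pairf n p' t := by
    funext AB
    rw [pairf, pairf, h3, h4]
  rw [w, w, hf, bp_congr n h1 h2 h3 h4]

lemma bs_congr {F F' : ℕ → Set (Finset (Fin n))} {p p' : ℕ → Finset (Fin n) → ℝ} {t : ℕ}
    (h1 : F t = F' t) (h3 : p t = p' t) : bs n F p t = bs n F' p' t := by
  rw [bs, bs, feas_congr n h1, h3]

lemma st_congr {F F' : ℕ → Set (Finset (Fin n))} {p p' : ℕ → Finset (Fin n) → ℝ} :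
    ∀ t : ℕ, (∀ s, s ≤ t → s < T → F s = F' s ∧ p s = p' s) →
      st n T F p t = st n T F' p' t := by
  intro t
  induction t with
  | zero => intro _; rfl
  | succ t IH =>
    intro hag
    have hprev := IH fun s hs hs' => hag s (Nat.le_succ_of_le hs) hs'
    rw [st_succ, st_succ, hprev]
    rcases h' : st n T F' p' t with _ | ⟨v, B⟩
    · by_cases htT : t + 1 < T
      · have hw := w_congr n (hag t (by omega) (by omega)).1 (hag (t + 1) le_rfl htT).1
          (hag t (by omega) (by omega)).2 (hag (t + 1) le_rfl htT).2
        have hbp := bp_congr n (hag t (by omega) (by omega)).1 (hag (t + 1) le_rfl htT).1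
          (hag t (by omega) (by omega)).2 (hag (t + 1) le_rfl htT).2
        simp only [hw, hbp]
      · simp only [if_neg htT]
    · by_cases htT : t + 1 < T
      · have hw := w_congr n (hag t (by omega) (by omega)).1 (hag (t + 1) le_rfl htT).1
          (hag t (by omega) (by omega)).2 (hag (t + 1) le_rfl htT).2
        have hbp := bp_congr n (hag t (by omega) (by omega)).1 (hag (t + 1) le_rfl htT).1
          (hag t (by omega) (by omega)).2 (hag (t + 1) le_rfl htT).2
        simp only [hw, hbp]
      · have hc1 : ¬(t + 1 < T ∧ 2 * v ≤ w n F p t) := fun hh => htT hh.1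
        have hc2 : ¬(t + 1 < T ∧ 2 * v ≤ w n F' p' t) := fun hh => htT hh.1
        simp only [if_neg hc1, if_neg hc2]

lemma algo_lookahead {F F' : ℕ → Set (Finset (Fin n))} {p p' : ℕ → Finset (Fin n) → ℝ}
    {t : ℕ} (htT : t < T) (hag : ∀ s, s ≤ t + 1 → s < T → F s = F' s ∧ p s = p' s) :
    algo n T F p t = algo n T F' p' t := by
  have hst : st n T F p t = st n T F' p' t :=
    st_congr n T t fun s hs hs' => hag s (le_trans hs (Nat.le_succ t)) hs'
  simp only [algo]
  rw [hst]
  rcases h' : st n T F' p' t with _ | ⟨v, B⟩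
  · by_cases h1 : t + 1 < T
    · have hbp := bp_congr n (hag t (by omega) htT).1 (hag (t + 1) le_rfl h1).1
        (hag t (by omega) htT).2 (hag (t + 1) le_rfl h1).2
      simp only [hbp]
      rw [if_pos h1, if_pos h1]
    · have hbs := bs_congr n (F := F) (F' := F') (hag t (by omega) htT).1
        (hag t (by omega) htT).2
      simp only [hbs]
      rw [if_neg h1, if_neg h1]
  · by_cases h1 : t + 1 < T
    · have hw := w_congr n (hag t (by omega) htT).1 (hag (t + 1) le_rfl h1).1
        (hag t (by omega) htT).2 (hag (t + 1) le_rfl h1).2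
      have hbp := bp_congr n (hag t (by omega) htT).1 (hag (t + 1) le_rfl h1).1
        (hag t (by omega) htT).2 (hag (t + 1) le_rfl h1).2
      simp only [hw, hbp]
    · have hc1 : ¬(t + 1 < T ∧ 2 * v ≤ w n F p t) := fun hh => h1 hh.1
      have hc2 : ¬(t + 1 < T ∧ 2 * v ≤ w n F' p' t) := fun hh => h1 hh.1
      simp only [if_neg hc1, if_neg hc2]


end Stmt11

/-- In the GE model with intersection bonus and 1-lookahead, for every `n` and `T`
there is a deterministic 1-lookahead algorithm that is 4-competitive: on every
valid general-evolution instance its output is feasible and has value at least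
`OPT / 4`. -/
theorem stmt11 (n T : ℕ) :
    ∃ alg : (ℕ → Set (Finset (Fin n))) → (ℕ → Finset (Fin n) → ℝ) → ℕ → Finset (Fin n),
      IsLookahead1 n T alg ∧
      ∀ F p, ValidInstance n T F p →
        (∀ t, t < T → alg F p t ∈ F t) ∧
        ∀ S : ℕ → Finset (Fin n), IsSol n T F S →
          intVal n T p S / 4 ≤ intVal n T p (alg F p) := by

  classical
  refine ⟨Stmt11.algo n T, ?_, ?_⟩
  · intro F p F' p' t htT hag
    exact Stmt11.algo_lookahead n T htT hag
  · rintro F p ⟨hF, hp⟩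
    refine ⟨fun t ht => Stmt11.algo_feas hF ht, ?_⟩
    intro S hS
    have h4 : intVal n T p S ≤ 4 * intVal n T p (Stmt11.algo n T F p) := by
      rcases Nat.lt_or_ge T 2 with hT | hT
      · interval_cases T
        · simp [intVal]
        · have hA0 : Stmt11.algo n 1 F p 0 = Stmt11.bs n F p 0 := by
            simp [Stmt11.algo, Stmt11.st]
          have hle : p 0 (S 0) ≤ p 0 (Stmt11.algo n 1 F p 0) := by
            rw [hA0]; exact Stmt11.le_bs hF (by omega) (hS 0 (by omega))
          have hnn : 0 ≤ p 0 (Stmt11.algo n 1 F p 0) := hp 0 (by omega) _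
          simp only [intVal, Finset.range_one, Finset.sum_singleton, Nat.sub_self,
            Finset.range_zero, Finset.sum_empty, add_zero]
          linarith
      · have h1 := Stmt11.opt_le_wsum hF hp hS hT
        have h2 := Stmt11.wsum_le_cwsum hF hp
        have h3 := Stmt11.cw_le_val hF hp
        simp only [intVal]
        linarith
    linarith
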